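/- Let H be a hypergraph with at least two edges. An edge E of H is a splitting edge (i.e., I(H) = (x^E) + I(H\E) is an Eliahou–Kervaire splitting) if and only if there exists a vertex z ∈ E such that (x^E) ∩ I(H\E) ⊆ (x^E) ∩ I(H\{z}), where H\{z} is the sub-hypergraph of H obtained by deleting every edge containing z. -/

import Mathlib

open Finset
open scoped Classical

noncomputable section

/-- A simple hypergraph: all edges have at least two vertices and no edge contains another. -/
structure SimpleHypergraph (V : Type*) where
  edges : Finset (Finset V)
  card_ge : ∀ e ∈ edges, 2 ≤ e.card
  antichain : ∀ e ∈ edges, ∀ f ∈ edges, e ⊆ f → e = f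

variable {V : Type*} [DecidableEq V]

/-- A chain `(E₀, x₁, E₁, …, xₙ, Eₙ)` in a hypergraph, recorded as the list of its edges;
the vertex conditions amount to `xₖ ∈ Eₖ₋₁ ∩ Eₖ`. -/
def IsHChain (H : SimpleHypergraph V) (l : List (Finset V)) : Prop :=
  l ≠ [] ∧ l.Nodup ∧ (∀ e ∈ l, e ∈ H.edges) ∧
  ∃ xs : List V, xs.Nodup ∧ xs.length + 1 = l.length ∧
    ∀ i, (h : i < xs.length) → xs.get ⟨i, h⟩ ∈ l.getD i ∅ ∩ l.getD (i+1) ∅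

/-- A proper chain: `|Eᵢ ∩ Eᵢ₊₁| = |Eᵢ₊₁| - 1` for all `i`. -/
def IsProperChain (H : SimpleHypergraph V) (l : List (Finset V)) : Prop :=
  IsHChain H l ∧ ∀ i, i + 1 < l.length →
    (l.getD i ∅ ∩ l.getD (i+1) ∅).card + 1 = (l.getD (i+1) ∅).card

/-- A proper irredundant chain: no proper subsequence with the same endpoints is a proper
chain. -/
def IsPIChain (H : SimpleHypergraph V) (l : List (Finset V)) : Prop :=
  IsProperChain H l ∧ ∀ l' : List (Finset V), l'.Sublist l → l' ≠ l →
    l'.head? = l.head? → l'.getLast? = l.getLast? → ¬ IsProperChain H l'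

/-- The distance between two edges: minimal length of a proper irredundant chain
from `E` to `F` (`∞` if there is none). -/
def edgeDist (H : SimpleHypergraph V) (E F : Finset V) : ℕ∞ :=
  sInf ((fun l : List (Finset V) => ((l.length - 1 : ℕ) : ℕ∞)) ''
    {l | IsPIChain H l ∧ l.head? = some E ∧ l.getLast? = some F})

/-- A `d`-uniform properly-connected hypergraph. -/
def UniformPC (H : SimpleHypergraph V) (d : ℕ) : Prop :=
  (∀ e ∈ H.edges, e.card = d) ∧
  ∀ E ∈ H.edges, ∀ F ∈ H.edges, (E ∩ F).Nonempty →
    edgeDist H E F = ((d - (E ∩ F).card : ℕ) : ℕ∞)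

/-- The sub-hypergraph consisting of the edges satisfying `P`. -/
def SimpleHypergraph.restrict (H : SimpleHypergraph V) (P : Finset V → Prop) :
    SimpleHypergraph V where
  edges := H.edges.filter P
  card_ge := fun e he => H.card_ge e (Finset.mem_filter.mp he).1
  antichain := fun e he f hf hef =>
    H.antichain e (Finset.mem_filter.mp he).1 f (Finset.mem_filter.mp hf).1 hef

/-- The vertex neighbor set `N(E)` of an edge: union of `F \ E` over edges at distance 1. -/
def nbrSet (H : SimpleHypergraph V) (E : Finset V) : Finset V :=
  (H.edges.filter fun F => edgeDist H E F = 1).sup fun F => F \ E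

variable (k : Type*) [Field k]

/-- The squarefree monomial attached to an edge. -/
def edgeMonomial (E : Finset V) : MvPolynomial V k := ∏ x ∈ E, MvPolynomial.X x

/-- The edge ideal of a hypergraph. -/
def edgeIdeal (H : SimpleHypergraph V) : Ideal (MvPolynomial V k) :=
  Ideal.span ((fun E => edgeMonomial k E) '' ↑H.edges)

/-- The exponent vector of the squarefree monomial attached to an edge. -/
def mexp (E : Finset V) : V →₀ ℕ := ∑ x ∈ E, Finsupp.single x 1

/-- The minimal monomials (w.r.t. divisibility) among a finite set of monomials;
these are the minimal generators of the monomial ideal they generate. -/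
def minMon (A : Finset (V →₀ ℕ)) : Finset (V →₀ ℕ) :=
  A.filter fun m => ∀ m' ∈ A, m' ≤ m → m' = m

/-- Minimal generators of `J ∩ K`, where `J`, `K` are the monomial ideals with
(minimal) monomial generators `A`, `B`: minimal elements among the pairwise lcm's. -/
def interMin (A B : Finset (V →₀ ℕ)) : Finset (V →₀ ℕ) :=
  minMon ((A ×ˢ B).image fun p => p.1 ⊔ p.2)

/-- Eliahou–Kervaire splitting: the monomial ideal generated by `A ∪ B` is split as
the sum of the ideals generated by `A` and by `B`. -/
def IsSplitting (A B : Finset (V →₀ ℕ)) : Prop :=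
  A.Nonempty ∧ B.Nonempty ∧ Disjoint A B ∧
  (∀ m ∈ A ∪ B, ∀ m' ∈ A ∪ B, m' ≤ m → m' = m) ∧
  ∃ φ ψ : (V →₀ ℕ) → (V →₀ ℕ),
    (∀ w ∈ interMin A B, φ w ∈ A ∧ ψ w ∈ B ∧ w = φ w ⊔ ψ w) ∧
    ∀ S ⊆ interMin A B, S.Nonempty → S.sup φ < S.sup id ∧ S.sup ψ < S.sup id

/-- A splitting edge of a hypergraph: `I(H) = (x^E) + I(H \ E)` is a splitting. -/
def IsSplittingEdge (H : SimpleHypergraph V) (E : Finset V) : Prop :=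
  E ∈ H.edges ∧ IsSplitting {mexp E} ((H.edges.erase E).image mexp)

variable [LinearOrder V]

/-- Total degree of a monomial. -/
def mdeg (m : V →₀ ℕ) : ℕ := m.sum fun _ e => e

/-- Basis of the degree-`j` part of the `i`-th term of the Taylor complex of the monomial
ideal generated by `G`: `i`-element subsets of `G` whose lcm has degree `j`. -/
def TaylorIndex (G : Finset (V →₀ ℕ)) (i j : ℕ) : Finset (Finset (V →₀ ℕ)) :=
  G.powerset.filter fun S => S.card = i ∧ mdeg (S.sup id) = j

/-- Matrix of the Taylor-complex differential `T_{i+1} → T_i` reduced mod the maximal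
ideal, in homological degree-`j` graded part. -/
def taylorMatrix (G : Finset (V →₀ ℕ)) (i j : ℕ) :
    Matrix (TaylorIndex G i j) (TaylorIndex G (i+1) j) k :=
  fun S' S =>
    if (S' : Finset (V →₀ ℕ)) ⊆ (S : Finset (V →₀ ℕ)) ∧
        (S' : Finset (V →₀ ℕ)).sup id = (S : Finset (V →₀ ℕ)).sup id then
      ∑ m ∈ (S : Finset (V →₀ ℕ)) \ (S' : Finset (V →₀ ℕ)),
        (-1 : k) ^ ((S' : Finset (V →₀ ℕ)).filter fun a => toLex a < toLex m).card
    else 0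

/-- The Taylor-complex differential reduced mod the maximal ideal. -/
def taylorBoundary (G : Finset (V →₀ ℕ)) (i j : ℕ) :
    ((TaylorIndex G (i+1) j) → k) →ₗ[k] ((TaylorIndex G i j) → k) :=
  Matrix.mulVecLin (taylorMatrix k G i j)

/-- The graded Betti number `β_{i,j}` of the monomial ideal generated by `G`, computed as
the dimension of the degree-`j` part of the `i`-th homology of the Taylor complex tensored
with the residue field. -/
def monomialBetti (G : Finset (V →₀ ℕ)) (i j : ℕ) : ℕ :=
  Module.finrank k (LinearMap.ker (taylorBoundary k G i j)) -
  Module.finrank k (LinearMap.range (taylorBoundary k G (i+1) j))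

/-- Castelnuovo–Mumford regularity of the monomial ideal generated by `G`. -/
def monReg (G : Finset (V →₀ ℕ)) : ℕ :=
  sSup {r | ∃ i j, monomialBetti k G i j ≠ 0 ∧ r + i = j}

/-- Projective dimension of the monomial ideal generated by `G`. -/
def monPdim (G : Finset (V →₀ ℕ)) : ℕ :=
  sSup {i | ∃ j, monomialBetti k G i j ≠ 0}

/-- Graded Betti numbers of the edge ideal of a hypergraph. -/
def edgeBetti (H : SimpleHypergraph V) (i j : ℕ) : ℕ :=
  monomialBetti k (H.edges.image mexp) i j

/-- Regularity of the edge ideal of a hypergraph. -/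
def edgeReg (H : SimpleHypergraph V) : ℕ :=
  monReg k (H.edges.image mexp)

section Aux

variable {V : Type*} [DecidableEq V]

lemma mexp_apply' (E : Finset V) (x : V) : mexp E x = if x ∈ E then 1 else 0 := by
  classical
  rw [mexp, Finsupp.finset_sum_apply]
  simp [Finsupp.single_apply]

lemma mexp_le_iff {E F : Finset V} : mexp E ≤ mexp F ↔ E ⊆ F := by
  constructor
  · intro h x hx
    have := h x
    rw [mexp_apply', mexp_apply', if_pos hx] at this
    by_contra hxF
    rw [if_neg hxF] at this
    omega
  · intro h x
    rw [mexp_apply', mexp_apply']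
    by_cases hx : x ∈ E
    · rw [if_pos hx, if_pos (h hx)]
    · simp [hx]

lemma mexp_inj {E F : Finset V} (h : mexp E = mexp F) : E = F :=
  Finset.Subset.antisymm (mexp_le_iff.mp h.le) (mexp_le_iff.mp h.ge)

lemma mexp_sup (E F : Finset V) : mexp E ⊔ mexp F = mexp (E ∪ F) := by
  ext x
  rw [Finsupp.sup_apply, mexp_apply', mexp_apply', mexp_apply']
  by_cases hE : x ∈ E <;> by_cases hF : x ∈ F <;>
    simp [hE, hF, Finset.mem_union]

lemma finsupp_finset_sup_apply {α : Type*} (S : Finset α) (f : α → (V →₀ ℕ)) (x : V) :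
    (S.sup f) x = S.sup fun a => f a x := by
  classical
  induction S using Finset.induction with
  | empty => simp [Finsupp.bot_eq_zero]
  | insert _ _ h ih => simp [Finset.sup_insert, Finsupp.sup_apply, ih]

lemma edgeMonomial_eq (k : Type*) [Field k] (E : Finset V) :
    edgeMonomial k E = MvPolynomial.monomial (mexp E) 1 := by
  classical
  rw [edgeMonomial, mexp]
  induction E using Finset.induction with
  | empty => simp
  | insert _ _ h ih =>
      rw [Finset.prod_insert h, Finset.sum_insert h, ih, MvPolynomial.X,
        MvPolynomial.monomial_mul, one_mul]

lemma exists_minMon_le (A : Finset (V →₀ ℕ)) {a : V →₀ ℕ} (ha : a ∈ A) :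
    ∃ m ∈ minMon A, m ≤ a := by
  obtain ⟨m, hm, hmin⟩ := Finset.exists_minimal (s := A.filter (· ≤ a)) ⟨a, by simp [ha]⟩
  refine ⟨m, ?_, (Finset.mem_filter.mp hm).2⟩
  rw [minMon, Finset.mem_filter]
  refine ⟨(Finset.mem_filter.mp hm).1, fun m' hm' hle => ?_⟩
  exact le_antisymm hle (hmin (Finset.mem_filter.mpr ⟨hm', hle.trans (Finset.mem_filter.mp hm).2⟩) hle)

lemma mem_pairSup {E : Finset V} {B : Finset (V →₀ ℕ)} {w : V →₀ ℕ} :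
    w ∈ (({mexp E} : Finset (V →₀ ℕ)) ×ˢ B).image (fun p => p.1 ⊔ p.2) ↔
      ∃ b ∈ B, w = mexp E ⊔ b := by
  constructor
  · rintro hw
    obtain ⟨p, hp, rfl⟩ := Finset.mem_image.mp hw
    obtain ⟨h1, h2⟩ := Finset.mem_product.mp hp
    exact ⟨p.2, h2, by rw [Finset.mem_singleton.mp h1]⟩
  · rintro ⟨b, hb, rfl⟩
    exact Finset.mem_image.mpr ⟨(mexp E, b),
      Finset.mem_product.mpr ⟨Finset.mem_singleton_self _, hb⟩, rfl⟩

/-- Characterisation of membership in `interMin {mexp E} B`. -/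
lemma mem_interMin_iff {E : Finset V} {B : Finset (V →₀ ℕ)} {w : V →₀ ℕ} :
    w ∈ interMin {mexp E} B ↔
      (∃ b ∈ B, w = mexp E ⊔ b) ∧ ∀ b ∈ B, mexp E ⊔ b ≤ w → mexp E ⊔ b = w := by
  rw [interMin, minMon, Finset.mem_filter, mem_pairSup]
  constructor
  · rintro ⟨h1, h2⟩
    exact ⟨h1, fun b hb hle => h2 _ (mem_pairSup.mpr ⟨b, hb, rfl⟩) hle⟩
  · rintro ⟨h1, h2⟩
    refine ⟨h1, fun m' hm' hle => ?_⟩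
    obtain ⟨b, hb, rfl⟩ := mem_pairSup.mp hm'
    exact h2 b hb hle

/-- The combinatorial splitting-edge condition. -/
def SECond (H : SimpleHypergraph V) (E : Finset V) (z : V) : Prop :=
  ∀ F ∈ H.edges, F ≠ E → ∃ F' ∈ H.edges, z ∉ F' ∧ F' ⊆ E ∪ F
/-- The choice-based splitting function `ψ`. -/
def psiFun (H : SimpleHypergraph V) (E : Finset V) (z : V) : (V →₀ ℕ) → (V →₀ ℕ) :=
  fun w => if h : ∃ F, F ∈ H.edges ∧ F ≠ E ∧ z ∉ F ∧ mexp F ≤ w then mexp h.choose else 0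

lemma key_combinatorial (H : SimpleHypergraph V) (h2 : 2 ≤ H.edges.card)
    (E : Finset V) (hE : E ∈ H.edges) :
    IsSplittingEdge H E ↔ ∃ z ∈ E, SECond H E z := by
  classical
  set B : Finset (V →₀ ℕ) := (H.edges.erase E).image mexp with hB
  have hBmem : ∀ {b : V →₀ ℕ}, b ∈ B → ∃ F, F ∈ H.edges ∧ F ≠ E ∧ b = mexp F := by
    intro b hb
    obtain ⟨F, hF, rfl⟩ := Finset.mem_image.mp hb
    exact ⟨F, (Finset.mem_erase.mp hF).2, (Finset.mem_erase.mp hF).1, rfl⟩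
  have hEne : E.Nonempty := Finset.card_pos.mp (by have := H.card_ge E hE; omega)
  have hIM : ∀ {w : V →₀ ℕ}, w ∈ interMin {mexp E} B →
      ∃ F, F ∈ H.edges ∧ F ≠ E ∧ w = mexp (E ∪ F) := by
    intro w hw
    obtain ⟨⟨b, hb, rfl⟩, -⟩ := mem_interMin_iff.mp hw
    obtain ⟨F, hF, hFE, rfl⟩ := hBmem hb
    exact ⟨F, hF, hFE, mexp_sup E F⟩
  constructor
  · -- splitting edge → combinatorial condition
    rintro ⟨-, hA, hBne, hdisj, hmin, φ, ψ, hw', hS⟩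
    by_contra hcon
    push_neg at hcon
    have hbad : ∀ z ∈ E, ∃ F, F ∈ H.edges ∧ F ≠ E ∧
        ∀ F' ∈ H.edges, F' ⊆ E ∪ F → z ∈ F' := by
      intro z hz
      have hc := hcon z hz
      rw [SECond] at hc
      push_neg at hc
      obtain ⟨F, hF, hFE, hall⟩ := hc
      refine ⟨F, hF, hFE, fun F' hF' hsub => ?_⟩
      by_contra hzF'
      exact (hall F' hF' hzF') hsub
    choose Fz hFz1 hFz2 hFz3 using hbad
    have hwex : ∀ z (hz : z ∈ E),
        ∃ w ∈ interMin {mexp E} B, w ≤ mexp E ⊔ mexp (Fz z hz) := by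
      intro z hz
      apply exists_minMon_le
      exact mem_pairSup.mpr ⟨mexp (Fz z hz),
        Finset.mem_image.mpr ⟨Fz z hz, Finset.mem_erase.mpr ⟨hFz2 z hz, hFz1 z hz⟩, rfl⟩, rfl⟩
    choose wz hwz1 hwz2 using hwex
    set S : Finset (V →₀ ℕ) := E.attach.image (fun z => wz z.1 z.2) with hSdef
    have hSsub : S ⊆ interMin {mexp E} B := by
      intro w hw
      obtain ⟨z, -, rfl⟩ := Finset.mem_image.mp hw
      exact hwz1 z.1 z.2
    have hSne : S.Nonempty := (Finset.attach_nonempty_iff.mpr hEne).image _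
    obtain ⟨-, hlt⟩ := hS S hSsub hSne
    have hdecomp : ∀ w ∈ S, w = mexp E ⊔ ψ w := by
      intro w hw
      obtain ⟨hφ, -, heq⟩ := hw' w (hSsub hw)
      rwa [Finset.mem_singleton.mp hφ] at heq
    have hEle : mexp E ≤ S.sup ψ := by
      rw [Finsupp.le_def]
      intro x
      rw [mexp_apply']
      by_cases hx : x ∈ E
      · rw [if_pos hx]
        have hmem : wz x hx ∈ S :=
          Finset.mem_image.mpr ⟨⟨x, hx⟩, Finset.mem_attach _ _, rfl⟩
        obtain ⟨hφ, hψ, heq⟩ := hw' (wz x hx) (hwz1 x hx)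
        obtain ⟨F', hF', hF'E, hψeq⟩ := hBmem hψ
        have hF'sub : F' ⊆ E ∪ Fz x hx := by
          rw [← mexp_le_iff, ← mexp_sup]
          calc mexp F' = ψ (wz x hx) := hψeq.symm
            _ ≤ wz x hx := by
                have h5 : φ (wz x hx) ⊔ ψ (wz x hx) ≤ wz x hx := le_of_eq heq.symm
                exact le_trans le_sup_right h5
            _ ≤ mexp E ⊔ mexp (Fz x hx) := hwz2 x hx
        have hxF' : x ∈ F' := hFz3 x hx F' hF' hF'sub
        have h1 : (ψ (wz x hx)) x = 1 := by
          rw [hψeq, mexp_apply', if_pos hxF']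
        calc (1 : ℕ) = (ψ (wz x hx)) x := h1.symm
          _ ≤ (S.sup ψ) x := Finsupp.le_def.mp (Finset.le_sup (f := ψ) hmem) x
      · rw [if_neg hx]; exact Nat.zero_le _
    have hfinal : S.sup id ≤ S.sup ψ := by
      apply Finset.sup_le
      intro w hw
      rw [id_eq, hdecomp w hw]
      exact sup_le hEle (Finset.le_sup (f := ψ) hw)
    exact hlt.2 hfinal
  · -- combinatorial condition → splitting edge
    rintro ⟨z, hz, hcond⟩
    have hKey : ∀ w ∈ interMin {mexp E} B,
        psiFun H E z w ∈ B ∧ w = mexp E ⊔ psiFun H E z w ∧ psiFun H E z w ≤ w ∧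
        (psiFun H E z w) z = 0 ∧ mexp E < w := by
      intro w hw
      obtain ⟨F, hF, hFE, hwF⟩ := hIM hw
      have hPw : ∃ F, F ∈ H.edges ∧ F ≠ E ∧ z ∉ F ∧ mexp F ≤ w := by
        obtain ⟨F', hF'edge, hzF', hF'sub⟩ := hcond F hF hFE
        have hF'E : F' ≠ E := fun h => hzF' (h ▸ hz)
        exact ⟨F', hF'edge, hF'E, hzF', by rw [hwF, mexp_le_iff]; exact hF'sub⟩
      have hψw : psiFun H E z w = mexp hPw.choose := by
        rw [psiFun, dif_pos hPw]
      obtain ⟨hF₀, hF₀E, hzF₀, hF₀le⟩ := hPw.choose_spec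
      rw [hψw]
      have hmemB : mexp hPw.choose ∈ B :=
        Finset.mem_image.mpr ⟨hPw.choose, Finset.mem_erase.mpr ⟨hF₀E, hF₀⟩, rfl⟩
      have hdec : w = mexp E ⊔ mexp hPw.choose := by
        obtain ⟨-, hminw⟩ := mem_interMin_iff.mp hw
        refine (hminw (mexp hPw.choose) hmemB ?_).symm
        exact sup_le (by rw [hwF, mexp_le_iff]; exact Finset.subset_union_left) hF₀le
      have hElt : mexp E < w := by
        refine lt_of_le_of_ne
          (by rw [hwF, mexp_le_iff]; exact Finset.subset_union_left) ?_
        intro hcontra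
        have hEuF : E ∪ F = E := (mexp_inj (hwF ▸ hcontra)).symm
        have hFsubE : F ⊆ E := fun x hx => hEuF ▸ Finset.mem_union_right E hx
        exact hFE (H.antichain F hF E hE hFsubE)
      exact ⟨hmemB, hdec, hF₀le, by rw [mexp_apply', if_neg hzF₀], hElt⟩
    refine ⟨hE, Finset.singleton_nonempty _, ?_, ?_, ?_,
      fun _ => mexp E, psiFun H E z, ?_, ?_⟩
    · -- B nonempty
      have hero : (H.edges.erase E).Nonempty := by
        rw [← Finset.card_pos, Finset.card_erase_of_mem hE]; omega
      exact hero.image _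
    · -- disjoint
      rw [Finset.disjoint_singleton_left]
      intro hmem
      obtain ⟨F, -, hFE, hb⟩ := hBmem hmem
      exact hFE (mexp_inj hb.symm)
    · -- antichain of generators
      intro m hm m' hm' hle
      have hget : ∀ {u : V →₀ ℕ}, u ∈ ({mexp E} : Finset (V →₀ ℕ)) ∪ B →
          ∃ G, G ∈ H.edges ∧ u = mexp G := by
        intro u hu
        rcases Finset.mem_union.mp hu with hu | hu
        · exact ⟨E, hE, Finset.mem_singleton.mp hu⟩
        · obtain ⟨F, hF, -, hb⟩ := hBmem hu
          exact ⟨F, hF, hb⟩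
      obtain ⟨G, hG, rfl⟩ := hget hm
      obtain ⟨G', hG', rfl⟩ := hget hm'
      rw [mexp_le_iff] at hle
      rw [H.antichain G' hG' G hG hle]
    · -- the splitting function property on interMin
      intro w hw
      obtain ⟨h1, h2, -, -, -⟩ := hKey w hw
      exact ⟨Finset.mem_singleton_self _, h1, h2⟩
    · -- the strict inequalities
      intro S hSsub hSne
      obtain ⟨w₀, hw₀⟩ := hSne
      obtain ⟨-, -, -, -, hlt₀⟩ := hKey w₀ (hSsub hw₀)
      constructor
      · rw [Finset.sup_const ⟨w₀, hw₀⟩]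
        exact lt_of_lt_of_le hlt₀ (Finset.le_sup (f := id) hw₀)
      · have hle : S.sup (psiFun H E z) ≤ S.sup id := by
          apply Finset.sup_le
          intro w hw
          obtain ⟨-, -, h3, -, -⟩ := hKey w (hSsub hw)
          exact h3.trans (Finset.le_sup (f := id) hw)
        refine lt_of_le_of_ne hle ?_
        intro hcontra
        have hzero : (S.sup (psiFun H E z)) z = 0 := by
          rw [finsupp_finset_sup_apply]
          refine Nat.le_antisymm (Finset.sup_le fun w hw => ?_) (Nat.zero_le _)
          obtain ⟨-, -, -, h4, -⟩ := hKey w (hSsub hw)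
          rw [h4]
        have hone : 1 ≤ (S.sup id) z := by
          obtain ⟨-, h2', -, -, -⟩ := hKey w₀ (hSsub hw₀)
          have h1z : (1 : ℕ) = (mexp E) z := by rw [mexp_apply', if_pos hz]
          calc (1 : ℕ) = (mexp E) z := h1z
            _ ≤ w₀ z := by rw [h2', Finsupp.sup_apply]; exact le_sup_left
            _ ≤ (S.sup id) z := Finsupp.le_def.mp (Finset.le_sup (f := id) hw₀) z
        rw [← hcontra, hzero] at hone
        omega

lemma mem_restrict_iff (H : SimpleHypergraph V) (P : Finset V → Prop) (F : Finset V) :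
    F ∈ (H.restrict P).edges ↔ F ∈ H.edges ∧ P F := by
  classical
  simp [SimpleHypergraph.restrict, Finset.mem_filter]

lemma mem_edgeIdeal_iff (k : Type*) [Field k] (H' : SimpleHypergraph V)
    (p : MvPolynomial V k) :
    p ∈ edgeIdeal k H' ↔ ∀ m ∈ p.support, ∃ F ∈ H'.edges, mexp F ≤ m := by
  have himg : ((fun E => edgeMonomial k E) '' (H'.edges : Set (Finset V))) =
      (fun s => MvPolynomial.monomial s (1 : k)) '' (mexp '' (H'.edges : Set (Finset V))) := by
    rw [Set.image_image]
    exact Set.image_congr fun F _ => edgeMonomial_eq k F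
  rw [edgeIdeal, himg, MvPolynomial.mem_ideal_span_monomial_image]
  constructor
  · intro h m hm
    obtain ⟨si, hsi, hle⟩ := h m hm
    obtain ⟨F, hF, rfl⟩ := hsi
    exact ⟨F, hF, hle⟩
  · intro h m hm
    obtain ⟨F, hF, hle⟩ := h m hm
    exact ⟨mexp F, ⟨F, hF, rfl⟩, hle⟩

lemma mem_span_edgeMonomial_iff (k : Type*) [Field k] (E : Finset V)
    (p : MvPolynomial V k) :
    p ∈ Ideal.span {edgeMonomial k E} ↔ ∀ m ∈ p.support, mexp E ≤ m := by
  have himg : ({edgeMonomial k E} : Set (MvPolynomial V k)) =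
      (fun s => MvPolynomial.monomial s (1 : k)) '' {mexp E} := by
    rw [Set.image_singleton, edgeMonomial_eq]
  rw [himg, MvPolynomial.mem_ideal_span_monomial_image]
  simp

lemma bridge (k : Type*) [Field k] (H : SimpleHypergraph V) {E : Finset V}
    (hE : E ∈ H.edges) (z : V) :
    (Ideal.span {edgeMonomial k E} ⊓ edgeIdeal k (H.restrict (· ≠ E)) ≤
      Ideal.span {edgeMonomial k E} ⊓ edgeIdeal k (H.restrict fun F => z ∉ F)) ↔
      SECond H E z := by
  constructor
  · intro h F hF hFE
    set p : MvPolynomial V k := MvPolynomial.monomial (mexp (E ∪ F)) 1 with hp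
    have hsupp : p.support = {mexp (E ∪ F)} := by
      rw [hp, MvPolynomial.support_monomial, if_neg one_ne_zero]
    have hpmem : p ∈ Ideal.span {edgeMonomial k E} ⊓ edgeIdeal k (H.restrict (· ≠ E)) := by
      rw [Ideal.mem_inf, mem_span_edgeMonomial_iff, mem_edgeIdeal_iff]
      constructor
      · intro m hm
        rw [hsupp, Finset.mem_singleton] at hm
        rw [hm, ← mexp_sup]
        exact le_sup_left
      · intro m hm
        rw [hsupp, Finset.mem_singleton] at hm
        refine ⟨F, ?_, ?_⟩
        · exact (mem_restrict_iff H _ F).mpr ⟨hF, hFE⟩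
        · rw [hm, mexp_le_iff]; exact Finset.subset_union_right
    have := (Ideal.mem_inf.mp (h hpmem)).2
    rw [mem_edgeIdeal_iff] at this
    obtain ⟨F', hF', hle⟩ := this (mexp (E ∪ F)) (by rw [hsupp]; exact Finset.mem_singleton_self _)
    obtain ⟨hF'edge, hzF'⟩ := (mem_restrict_iff H _ F').mp hF'
    exact ⟨F', hF'edge, hzF', mexp_le_iff.mp hle⟩
  · intro h p hp
    rw [Ideal.mem_inf, mem_span_edgeMonomial_iff, mem_edgeIdeal_iff] at hp ⊢
    obtain ⟨hp1, hp2⟩ := hp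
    refine ⟨hp1, fun m hm => ?_⟩
    obtain ⟨F, hF, hFle⟩ := hp2 m hm
    obtain ⟨hFedge, hFE⟩ := (mem_restrict_iff H _ F).mp hF
    obtain ⟨F', hF'edge, hzF', hF'sub⟩ := h F hFedge hFE
    refine ⟨F', (mem_restrict_iff H _ F').mpr ⟨hF'edge, hzF'⟩, ?_⟩
    calc mexp F' ≤ mexp (E ∪ F) := mexp_le_iff.mpr hF'sub
      _ = mexp E ⊔ mexp F := (mexp_sup E F).symm
      _ ≤ m := sup_le (hp1 m hm) hFle

end Aux

theorem splittingEdge_iff (k : Type*) [Field k] {V : Type*} [DecidableEq V]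
    (H : SimpleHypergraph V) (h2 : 2 ≤ H.edges.card) (E : Finset V) (hE : E ∈ H.edges) :
    IsSplittingEdge H E ↔ ∃ z ∈ E,
      Ideal.span {edgeMonomial k E} ⊓ edgeIdeal k (H.restrict (· ≠ E)) ≤
      Ideal.span {edgeMonomial k E} ⊓ edgeIdeal k (H.restrict fun F => z ∉ F) := by
  rw [key_combinatorial H h2 E hE]
  exact exists_congr fun z => and_congr_right fun _ => (bridge k H hE z).symm
end
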